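/- Let K be a field, W a K-vector space of finite dimension d₀, and r a prime number. Let σ be the K-linear automorphism of the r-fold tensor power W^{⊗r} determined by cyclically permuting the tensor factors (w_1 ⊗ w_2 ⊗ … ⊗ w_r ↦ w_r ⊗ w_1 ⊗ … ⊗ w_{r−1}). Then the subspace of vectors fixed by σ has dimension (d₀^r + (r−1)·d₀)/r; equivalently, r · dim{x ∈ W^{⊗r} : σ(x) = x} = d₀^r + (r−1)·d₀. -/

import Mathlib

open TensorProduct PiTensorProduct


section BasisConstruction

variable {K W : Type*} [Field K] [AddCommGroup W] [Module K W]
variable {d : ℕ} (b : Module.Basis (Fin d) K W)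

noncomputable def tpFam (n : ℕ) : (Fin n → Fin d) → (⨂[K] _ : Fin n, W) :=
  fun f => tprod K fun i => b (f i)

noncomputable def tpDual (n : ℕ) : (⨂[K] _ : Fin n, W) →ₗ[K] ((Fin n → Fin d) → K) :=
  LinearMap.pi fun f => PiTensorProduct.lift
    ((MultilinearMap.mkPiAlgebra K (Fin n) K).compLinearMap fun i => b.coord (f i))

theorem tpDual_tpFam (n : ℕ) (g f : Fin n → Fin d) :
    tpDual b n (tpFam b n g) f = if f = g then 1 else 0 := by
  classical
  simp only [tpDual, tpFam, LinearMap.pi_apply, PiTensorProduct.lift.tprod,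
    MultilinearMap.compLinearMap_apply, MultilinearMap.mkPiAlgebra_apply,
    Module.Basis.coord_apply, Module.Basis.repr_self]
  by_cases h : f = g
  · subst h; simp
  · rw [if_neg h]
    obtain ⟨i, hi⟩ := Function.ne_iff.mp h
    apply Finset.prod_eq_zero (Finset.mem_univ i)
    rw [Finsupp.single_apply, if_neg (fun hh => hi hh.symm)]

theorem tpFam_linearIndependent (n : ℕ) : LinearIndependent K (tpFam b n) := by
  classical
  rw [Fintype.linearIndependent_iff]
  intro c hc f
  have h := congrFun (congrArg (tpDual b n) hc) f
  rw [map_sum, map_zero] at h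
  rw [Finset.sum_apply] at h
  simp only [LinearMap.map_smul, Pi.smul_apply, tpDual_tpFam, smul_eq_mul,
    mul_ite, mul_one, mul_zero] at h
  rw [Finset.sum_ite_eq] at h
  rw [if_pos (Finset.mem_univ f)] at h
  simpa using h

theorem tpFam_span (n : ℕ) : ⊤ ≤ Submodule.span K (Set.range (tpFam b n)) := by
  classical
  rw [← PiTensorProduct.span_tprod_eq_top]
  rw [Submodule.span_le]
  rintro x ⟨w, rfl⟩
  have hw : (tprod K (s := fun _ : Fin n => W)) w
      = tprod K fun i => ∑ j : Fin d, b.repr (w i) j • b j := by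
    congr 1
    funext i
    exact (b.sum_repr (w i)).symm
  rw [hw, MultilinearMap.map_sum]
  apply Submodule.sum_mem
  intro p _
  rw [MultilinearMap.map_smul_univ]
  exact Submodule.smul_mem _ _ (Submodule.subset_span ⟨p, rfl⟩)

end BasisConstruction


section Fixed

variable {K V ι : Type*} [Field K] [AddCommGroup V] [Module K V]
variable [Fintype ι] [DecidableEq ι]

/-- the setoid of cycles of a permutation -/
def tpCycSetoid (π : Equiv.Perm ι) : Setoid ι := ⟨π.SameCycle, Equiv.Perm.SameCycle.equivalence π⟩

theorem repr_sigma (e : Module.Basis ι K V) (π : Equiv.Perm ι) (σ : V ≃ₗ[K] V)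
    (hσ : ∀ i, σ (e i) = e (π i)) (v : V) (j : ι) :
    e.repr (σ v) j = e.repr v (π.symm j) := by
  have : (Finsupp.lapply j ∘ₗ (e.repr.toLinearMap ∘ₗ σ.toLinearMap)) v
      = (Finsupp.lapply (π.symm j) ∘ₗ e.repr.toLinearMap) v := by
    refine LinearMap.congr_fun (e.ext fun i => ?_) v
    simp only [LinearMap.comp_apply, LinearEquiv.coe_toLinearMap, LinearEquiv.coe_coe,
      Finsupp.lapply_apply, hσ i, Module.Basis.repr_self]
    rw [Finsupp.single_apply, Finsupp.single_apply]
    by_cases h : π i = j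
    · rw [if_pos h, if_pos (by rw [← h, Equiv.symm_apply_apply])]
    · rw [if_neg h, if_neg (fun hh => h (by rw [hh, Equiv.apply_symm_apply]))]
  simpa using this

theorem mem_ker_iff (e : Module.Basis ι K V) (π : Equiv.Perm ι) (σ : V ≃ₗ[K] V)
    (hσ : ∀ i, σ (e i) = e (π i)) (v : V) :
    v ∈ LinearMap.ker (σ.toLinearMap - LinearMap.id) ↔
      ∀ i, e.repr v (π i) = e.repr v i := by
  rw [LinearMap.mem_ker, LinearMap.sub_apply, LinearMap.id_apply, sub_eq_zero,
    LinearEquiv.coe_coe]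
  constructor
  · intro h i
    have := repr_sigma e π σ hσ v (π i)
    rw [h, Equiv.symm_apply_apply] at this
    exact this
  · intro h
    apply e.repr.injective
    ext j
    rw [repr_sigma e π σ hσ v j]
    have h2 := h (π.symm j)
    rw [Equiv.apply_symm_apply] at h2
    exact h2.symm

theorem repr_invariant (c : ι → K) (π : Equiv.Perm ι) (h : ∀ i, c (π i) = c i) :
    ∀ (k : ℤ) (i : ι), c ((π ^ k) i) = c i := by
  have hnat : ∀ (k : ℕ) (i : ι), c ((π ^ k) i) = c i := by
    intro k
    induction k with
    | zero => intro i; simp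
    | succ m ih => intro i; rw [pow_succ, Equiv.Perm.mul_apply, ih, h]
  intro k i
  cases k with
  | ofNat m => rw [Int.ofNat_eq_coe, zpow_natCast]; exact hnat m i
  | negSucc m =>
      rw [zpow_negSucc]
      have := hnat (m + 1) (((π ^ (m + 1))⁻¹) i)
      rw [← Equiv.Perm.mul_apply, mul_inv_cancel, Equiv.Perm.one_apply] at this
      exact this.symm

noncomputable def fixedEquiv (e : Module.Basis ι K V) (π : Equiv.Perm ι) (σ : V ≃ₗ[K] V)
    (hσ : ∀ i, σ (e i) = e (π i)) :
    LinearMap.ker (σ.toLinearMap - LinearMap.id) ≃ₗ[K] (Quotient (tpCycSetoid π) → K) where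
  toFun v := Quotient.lift (fun i => e.repr v.1 i) (by
    intro i j hij
    obtain ⟨k, hk⟩ := hij
    have hinv := repr_invariant (fun i => e.repr v.1 i) π
      ((mem_ker_iff e π σ hσ v.1).mp v.2) k i
    rw [hk] at hinv
    exact hinv.symm)
  map_add' v w := by
    funext q
    induction q using Quotient.ind with
    | _ i => simp
  map_smul' c v := by
    funext q
    induction q using Quotient.ind with
    | _ i => simp
  invFun g := ⟨e.repr.symm (Finsupp.equivFunOnFinite.symm fun i => g (Quotient.mk _ i)), by
    rw [mem_ker_iff e π σ hσ]
    intro i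
    rw [LinearEquiv.apply_symm_apply]
    simp only [Finsupp.equivFunOnFinite_symm_apply_apply]
    congr 1
    exact Quotient.sound ⟨-1, by simp⟩⟩
  left_inv v := by
    apply Subtype.ext
    apply e.repr.injective
    ext i
    rw [LinearEquiv.apply_symm_apply]
    simp
  right_inv g := by
    funext q
    induction q using Quotient.ind with
    | _ i =>
      simp only [Quotient.lift_mk]
      rw [LinearEquiv.apply_symm_apply]
      simp

theorem finrank_fixed (e : Module.Basis ι K V) (π : Equiv.Perm ι) (σ : V ≃ₗ[K] V)
    (hσ : ∀ i, σ (e i) = e (π i)) :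
    Module.finrank K (LinearMap.ker (σ.toLinearMap - LinearMap.id)) =
      Nat.card (Quotient (tpCycSetoid π)) := by
  have : Fintype (Quotient (tpCycSetoid π)) := Fintype.ofFinite _
  rw [(fixedEquiv e π σ hσ).finrank_eq, Module.finrank_pi, Nat.card_eq_fintype_card]

end Fixed

theorem card_cycles {ι : Type*} [Fintype ι] [DecidableEq ι] (π : Equiv.Perm ι)
    {r : ℕ} (hr : r.Prime) (hπ : π ^ r = 1) :
    r * Nat.card (Quotient (tpCycSetoid π)) =
      Fintype.card ι + (r - 1) * Fintype.card {i : ι // π i = i} := by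
  classical
  haveI : Fact r.Prime := ⟨hr⟩
  haveI : NeZero r := ⟨hr.ne_zero⟩
  haveI : Fact (1 < r) := ⟨hr.one_lt⟩
  have hpow : ∀ n : ℕ, π ^ (n % r) = π ^ n := by
    intro n
    conv_rhs => rw [← Nat.div_add_mod n r]
    rw [pow_add, pow_mul, hπ, one_pow, one_mul]
  set Q := Quotient (tpCycSetoid π) with hQ
  haveI instQ : Fintype Q := Fintype.ofFinite _
  set fib : Q → Finset ι := fun q => Finset.univ.filter (fun i => Quotient.mk _ i = q) with hfib
  have hsum : Fintype.card ι = ∑ q : Q, (fib q).card := by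
    rw [← Finset.card_univ]
    exact Finset.card_eq_sum_card_fiberwise (fun i _ => Finset.mem_univ _)
  have hfibcard : ∀ q : Q, (fib q).card = if π q.out = q.out then 1 else r := by
    intro q
    set x := q.out with hx
    by_cases hfix : π x = x
    · rw [if_pos hfix]
      have : fib q = {x} := by
        ext i
        simp only [hfib, Finset.mem_filter, Finset.mem_univ, true_and, Finset.mem_singleton]
        constructor
        · intro h
          rw [← q.out_eq, Quotient.eq] at h
          obtain ⟨k, hk⟩ := h.symm
          rw [Equiv.Perm.zpow_apply_eq_self_of_apply_eq_self hfix] at hk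
          exact hk.symm
        · rintro rfl
          exact q.out_eq
      rw [this, Finset.card_singleton]
    · rw [if_neg hfix]
      have hinj : Function.Injective (fun k : ZMod r => (π ^ (k.val)) x) := by
        intro a b hab
        by_contra hne
        simp only at hab
        -- first, a fixed-point equation with a positive exponent < r
        have h1 : (π ^ (r - b.val + a.val)) x = x := by
          have h2 : (π ^ (r - b.val)) ((π ^ a.val) x) = (π ^ (r - b.val)) ((π ^ b.val) x) := by
            rw [hab]
          rw [← Equiv.Perm.mul_apply, ← Equiv.Perm.mul_apply, ← pow_add, ← pow_add,
            Nat.sub_add_cancel (le_of_lt (ZMod.val_lt b)), hπ] at h2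
          simpa using h2
        set m := (a - b).val with hm
        have hmne : a - b ≠ 0 := sub_ne_zero_of_ne hne
        have hm0 : m ≠ 0 := fun h => hmne (by rwa [← ZMod.val_eq_zero])
        have hmr : m < r := ZMod.val_lt _
        have hcast : ((r - b.val + a.val : ℕ) : ZMod r) = a - b := by
          push_cast [Nat.cast_sub (le_of_lt (ZMod.val_lt b))]
          rw [ZMod.natCast_self, ZMod.natCast_rightInverse a, ZMod.natCast_rightInverse b]
          ring
        have hmmod : m = (r - b.val + a.val) % r := by
          rw [hm, ← hcast, ZMod.val_natCast]
        have key : (π ^ m) x = x := by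
          rw [hmmod, hpow]; exact h1
        -- m is invertible mod r
        have hmz : (m : ZMod r) ≠ 0 := by
          rw [Ne, ZMod.natCast_eq_zero_iff]
          exact Nat.not_dvd_of_pos_of_lt (Nat.pos_of_ne_zero hm0) hmr
        set u := ((m : ZMod r)⁻¹).val with hu
        have hmu : (m * u) % r = 1 := by
          have h3 : ((m * u : ℕ) : ZMod r) = 1 := by
            have e1 : ((m : ℕ) : ZMod r) = a - b := ZMod.natCast_rightInverse _
            have e2 : ((u : ℕ) : ZMod r) = ((m : ℕ) : ZMod r)⁻¹ := ZMod.natCast_rightInverse _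
            rw [Nat.cast_mul, e2, e1]
            exact mul_inv_cancel₀ hmne
          have h4 := congrArg ZMod.val h3
          rwa [ZMod.val_natCast, ZMod.val_one] at h4
        have hfixmu : (π ^ (m * u)) x = x := by
          rw [pow_mul]
          exact Equiv.Perm.pow_apply_eq_self_of_apply_eq_self key u
        apply hfix
        have h5 : π ^ (1 : ℕ) = π ^ (m * u) := by rw [← hmu, hpow]
        rw [pow_one] at h5
        rw [h5]
        exact hfixmu
      have himg : fib q = Finset.univ.image (fun k : ZMod r => (π ^ (k.val)) x) := by
        ext i
        simp only [hfib, Finset.mem_filter, Finset.mem_univ, true_and, Finset.mem_image]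
        constructor
        · intro h
          rw [← q.out_eq, Quotient.eq] at h
          obtain ⟨k, hk⟩ := h.symm
          have hk0 : (0 : ℤ) ≤ k % r := Int.emod_nonneg k (by exact_mod_cast hr.ne_zero)
          set n : ℕ := (k % r).toNat with hn
          have hzp : π ^ k = π ^ n := by
            conv_lhs => rw [← Int.mul_ediv_add_emod k r]
            rw [zpow_add, zpow_mul, zpow_natCast, hπ, one_zpow, one_mul,
              ← Int.toNat_of_nonneg hk0, zpow_natCast]
          have hnr : n < r := by
            have := Int.emod_lt_of_pos k (by exact_mod_cast hr.pos : (0:ℤ) < r)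
            omega
          refine ⟨(n : ZMod r), ?_⟩
          rw [ZMod.val_natCast, Nat.mod_eq_of_lt hnr, ← hzp]
          exact hk
        · rintro ⟨k, rfl⟩
          rw [← q.out_eq, Quotient.eq]
          exact Equiv.Perm.SameCycle.symm ⟨(k.val : ℤ), by rw [zpow_natCast]⟩
      rw [himg, Finset.card_image_of_injective _ hinj, Finset.card_univ, ZMod.card]
  -- number of singleton classes = number of fixed points
  set Fq : Finset Q := Finset.univ.filter (fun q : Q => π q.out = q.out) with hFq
  have hfixcard : Fintype.card {i : ι // π i = i} = Fq.card := by
    rw [Fintype.card_subtype]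
    apply Finset.card_bij (fun i _ => Quotient.mk (tpCycSetoid π) i)
    · intro i hi
      rw [Finset.mem_filter] at hi
      have hout : (Quotient.mk (tpCycSetoid π) i).out = i := by
        have hs : π.SameCycle (Quotient.mk (tpCycSetoid π) i).out i :=
          @Quotient.mk_out ι (tpCycSetoid π) i
        obtain ⟨k, hk⟩ := hs.symm
        rw [Equiv.Perm.zpow_apply_eq_self_of_apply_eq_self hi.2] at hk
        exact hk.symm
      rw [hFq, Finset.mem_filter]
      exact ⟨Finset.mem_univ _, by rw [hout]; exact hi.2⟩
    · intro i hi j hj hij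
      rw [Finset.mem_filter] at hi hj
      rw [Quotient.eq] at hij
      obtain ⟨k, hk⟩ := hij
      rw [Equiv.Perm.zpow_apply_eq_self_of_apply_eq_self hi.2] at hk
      exact hk
    · intro q hq
      rw [hFq, Finset.mem_filter] at hq
      exact ⟨q.out, Finset.mem_filter.mpr ⟨Finset.mem_univ _, hq.2⟩, q.out_eq⟩
  -- final arithmetic
  rw [hsum, hfixcard]
  have hsum2 : ∑ q : Q, (fib q).card = ∑ q : Q, if π q.out = q.out then 1 else r := by
    exact Finset.sum_congr rfl (fun q _ => hfibcard q)
  rw [hsum2]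
  have hFsum : (r - 1) * Fq.card = ∑ q : Q, if π q.out = q.out then r - 1 else 0 := by
    rw [hFq, ← Finset.sum_filter, Finset.sum_const, smul_eq_mul, mul_comm]
  rw [hFsum, ← Finset.sum_add_distrib]
  have hper : ∀ q : Q, ((if π q.out = q.out then 1 else r) +
      (if π q.out = q.out then r - 1 else 0)) = r := by
    intro q
    have h1r := hr.one_lt
    by_cases h : π q.out = q.out
    · rw [if_pos h, if_pos h]; omega
    · rw [if_neg h, if_neg h]; omega
  rw [Finset.sum_congr rfl (fun q _ => hper q), Finset.sum_const, smul_eq_mul,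
    Nat.card_eq_fintype_card, mul_comm, Finset.card_univ]

section BasisDef

variable {K W : Type*} [Field K] [AddCommGroup W] [Module K W] {d : ℕ} (b : Module.Basis (Fin d) K W)

noncomputable def tpBasis (n : ℕ) : Module.Basis (Fin n → Fin d) K (⨂[K] _ : Fin n, W) :=
  Module.Basis.mk (tpFam_linearIndependent b n) (tpFam_span b n)

theorem tpBasis_apply (n : ℕ) (f : Fin n → Fin d) :
    tpBasis b n f = tprod K fun i => b (f i) := Module.Basis.mk_apply _ _ f

end BasisDef

open Fin.NatCast in
theorem finRotate_pow_zero {r' : ℕ} (k : ℕ) :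
    ((finRotate (r' + 1)) ^ k) 0 = (k : Fin (r' + 1)) := by
  induction k with
  | zero => simp
  | succ m ih =>
      rw [pow_succ', Equiv.Perm.mul_apply, ih, finRotate_succ_apply]
      push_cast
      ring

theorem finRotate_prime_pow_eq_one {r : ℕ} (hr : r.Prime) : (finRotate r) ^ r = 1 := by
  obtain ⟨s, rfl⟩ : ∃ s, r = s + 2 := ⟨r - 2, by have := hr.two_le; omega⟩
  have ho : orderOf (finRotate (s + 2)) = s + 2 := by
    rw [Equiv.Perm.IsCycle.orderOf isCycle_finRotate, support_finRotate,
      Finset.card_univ, Fintype.card_fin]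
  have := pow_orderOf_eq_one (finRotate (s + 2))
  rwa [ho] at this

/-- Let `W` be a `K`-vector space of dimension `d₀` and `r` a prime. If `σ` is the linear
automorphism of the `r`-fold tensor power `W^{⊗r}` that cyclically permutes the tensor
factors (`w_1 ⊗ ⋯ ⊗ w_r ↦ w_r ⊗ w_1 ⊗ ⋯ ⊗ w_{r-1}`), then the subspace of `σ`-fixed vectors
has dimension `(d₀^r + (r-1)·d₀)/r`; equivalently
`r · dim {x : σ x = x} = d₀^r + (r-1)·d₀`. -/
theorem stmt6 {K W : Type*} [Field K] [AddCommGroup W] [Module K W] [FiniteDimensional K W]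
    (d₀ : ℕ) (hd : Module.finrank K W = d₀) (r : ℕ) (hr : r.Prime)
    (σ : (⨂[K] _ : Fin r, W) ≃ₗ[K] (⨂[K] _ : Fin r, W))
    (hσ : ∀ w : Fin r → W,
      σ (tprod K w) = tprod K (fun i => w ((finRotate r).symm i))) :
    r * Module.finrank K (LinearMap.ker (σ.toLinearMap - LinearMap.id)) =
      d₀ ^ r + (r - 1) * d₀ := by
  classical
  set b : Module.Basis (Fin d₀) K W := (Module.finBasis K W).reindex (finCongr hd) with hb
  set e : Module.Basis (Fin r → Fin d₀) K (⨂[K] _ : Fin r, W) := tpBasis b r with he'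
  set π : Equiv.Perm (Fin r → Fin d₀) :=
    Equiv.arrowCongr (finRotate r) (Equiv.refl (Fin d₀)) with hπ'
  have hπapp : ∀ (f : Fin r → Fin d₀) (i : Fin r), π f i = f ((finRotate r).symm i) := by
    intro f i
    simp [hπ', Equiv.arrowCongr]
  have hσe : ∀ f, σ (e f) = e (π f) := by
    intro f
    rw [he', tpBasis_apply, tpBasis_apply, hσ]
    rfl
  have h1 := finrank_fixed e π σ hσe
  -- π ^ r = 1
  have hPapp : ∀ (k : ℕ) (f : Fin r → Fin d₀) (i : Fin r),
      (π ^ k) f i = f (((finRotate r)⁻¹ ^ k) i) := by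
    intro k
    induction k with
    | zero => intro f i; simp
    | succ m ih =>
        intro f i
        rw [pow_succ, Equiv.Perm.mul_apply, ih (π f) i, hπapp, pow_succ',
          Equiv.Perm.mul_apply]
        rfl
  have hπr : π ^ r = 1 := by
    apply Equiv.ext
    intro f
    funext i
    rw [hPapp r f i, inv_pow, finRotate_prime_pow_eq_one hr]
    simp
  -- fixed points
  have hz : (0 : ℕ) < r := hr.pos
  have hfixconst : ∀ f : Fin r → Fin d₀, π f = f → ∀ i : Fin r, f i = f ⟨0, hz⟩ := by
    intro f hf i
    obtain ⟨r', rfl⟩ : ∃ r', r = r' + 1 := ⟨r - 1, by omega⟩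
    have hstep : ∀ j : Fin (r' + 1), f (finRotate (r' + 1) j) = f j := by
      intro j
      have := congrFun hf (finRotate (r' + 1) j)
      rw [hπapp, Equiv.symm_apply_apply] at this
      exact this.symm
    have hiter : ∀ (k : ℕ) (j : Fin (r' + 1)), f (((finRotate (r' + 1)) ^ k) j) = f j := by
      intro k
      induction k with
      | zero => intro j; simp
      | succ m ih =>
          intro j
          rw [pow_succ', Equiv.Perm.mul_apply, hstep, ih]
    have h0 : (⟨0, hz⟩ : Fin (r' + 1)) = 0 := rfl
    have := hiter i.val 0
    rw [finRotate_pow_zero, Fin.cast_val_eq_self] at this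
    rw [h0, this]
  have hcardfix : Fintype.card {f : Fin r → Fin d₀ // π f = f} = Fintype.card (Fin d₀) := by
    apply Fintype.card_of_bijective (f := fun f : {f : Fin r → Fin d₀ // π f = f} =>
      f.1 ⟨0, hz⟩)
    constructor
    · rintro ⟨f, hf⟩ ⟨g, hg⟩ hfg
      apply Subtype.ext
      funext i
      simp only at hfg
      show f i = g i
      rw [hfixconst f hf i, hfixconst g hg i, hfg]
    · intro j
      refine ⟨⟨fun _ => j, ?_⟩, rfl⟩
      funext i
      rw [hπapp]
  rw [Fintype.card_fin] at hcardfix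
  have h2 := card_cycles π hr hπr
  rw [hcardfix, Fintype.card_fun, Fintype.card_fin, Fintype.card_fin] at h2
  rw [h1, h2]
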